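/- Let P be a finite poset such that the cardinalities of all maximal chains of P have the same parity, and this parity is opposite to the parity of card(P). Then P is sign-balanced, i.e. L₋(P) = 0. -/

import Mathlib

open scoped Classical

namespace StanleyAux

variable {α : Type*} [Fintype α] [PartialOrder α]

/-- The operator swapping the elements at positions `i`, `i+1` (0-based) of a
linear order on `α`, provided they are incomparable; otherwise the identity. -/
noncomputable def tau {n : ℕ} (i : ℕ) (ψ : α ≃ Fin n) : α ≃ Fin n :=
  if h : i + 1 < n then
    if ψ.symm ⟨i, Nat.lt_of_succ_lt h⟩ ≤ ψ.symm ⟨i+1, h⟩ ∨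
        ψ.symm ⟨i+1, h⟩ ≤ ψ.symm ⟨i, Nat.lt_of_succ_lt h⟩
    then ψ
    else ψ.trans (Equiv.swap ⟨i, Nat.lt_of_succ_lt h⟩ ⟨i+1, h⟩)
  else ψ

lemma tau_of_comp {n : ℕ} (i : ℕ) (ψ : α ≃ Fin n) (h : i + 1 < n)
    (hc : ψ.symm ⟨i, Nat.lt_of_succ_lt h⟩ ≤ ψ.symm ⟨i+1, h⟩ ∨
      ψ.symm ⟨i+1, h⟩ ≤ ψ.symm ⟨i, Nat.lt_of_succ_lt h⟩) :
    tau i ψ = ψ := by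
  simp [tau, h, hc]

lemma tau_of_incomp {n : ℕ} (i : ℕ) (ψ : α ≃ Fin n) (h : i + 1 < n)
    (hc : ¬(ψ.symm ⟨i, Nat.lt_of_succ_lt h⟩ ≤ ψ.symm ⟨i+1, h⟩ ∨
      ψ.symm ⟨i+1, h⟩ ≤ ψ.symm ⟨i, Nat.lt_of_succ_lt h⟩)) :
    tau i ψ = ψ.trans (Equiv.swap ⟨i, Nat.lt_of_succ_lt h⟩ ⟨i+1, h⟩) := by
  simp [tau, h, hc]

lemma tau_of_ge {n : ℕ} (i : ℕ) (ψ : α ≃ Fin n) (h : ¬ (i + 1 < n)) :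
    tau i ψ = ψ := by
  simp [tau, h]

lemma trans_swap_symm_left {n : ℕ} (ψ : α ≃ Fin n) (a b : Fin n) :
    (ψ.trans (Equiv.swap a b)).symm a = ψ.symm b := by
  simp [Equiv.symm_trans_apply, Equiv.swap_apply_left]

lemma trans_swap_symm_right {n : ℕ} (ψ : α ≃ Fin n) (a b : Fin n) :
    (ψ.trans (Equiv.swap a b)).symm b = ψ.symm a := by
  simp [Equiv.symm_trans_apply, Equiv.swap_apply_right]

lemma trans_swap_symm_other {n : ℕ} (ψ : α ≃ Fin n) (a b c : Fin n)
    (h1 : c ≠ a) (h2 : c ≠ b) :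
    (ψ.trans (Equiv.swap a b)).symm c = ψ.symm c := by
  simp [Equiv.symm_trans_apply, Equiv.swap_apply_of_ne_of_ne h1 h2]

lemma tau_tau {n : ℕ} (i : ℕ) (ψ : α ≃ Fin n) : tau i (tau i ψ) = ψ := by
  by_cases h : i + 1 < n
  · set a : Fin n := ⟨i, Nat.lt_of_succ_lt h⟩
    set b : Fin n := ⟨i+1, h⟩
    by_cases hc : ψ.symm a ≤ ψ.symm b ∨ ψ.symm b ≤ ψ.symm a
    · rw [tau_of_comp i ψ h hc, tau_of_comp i ψ h hc]
    · rw [tau_of_incomp i ψ h hc]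
      have h1 : (ψ.trans (Equiv.swap a b)).symm a = ψ.symm b :=
        trans_swap_symm_left ψ a b
      have h2 : (ψ.trans (Equiv.swap a b)).symm b = ψ.symm a :=
        trans_swap_symm_right ψ a b
      have hc' : ¬((ψ.trans (Equiv.swap a b)).symm a ≤ (ψ.trans (Equiv.swap a b)).symm b ∨
          (ψ.trans (Equiv.swap a b)).symm b ≤ (ψ.trans (Equiv.swap a b)).symm a) := by
        rw [h1, h2]; tauto
      rw [tau_of_incomp i _ h hc']
      ext x
      simp [Equiv.trans_apply, Equiv.swap_apply_self, a, b]
  · rw [tau_of_ge i ψ h, tau_of_ge i ψ h]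

lemma monotone_trans_swap {n : ℕ} (ψ : α ≃ Fin n) (hψ : Monotone ψ) (i : ℕ)
    (h : i + 1 < n)
    (hic : ¬(ψ.symm ⟨i, Nat.lt_of_succ_lt h⟩ ≤ ψ.symm ⟨i+1, h⟩ ∨
      ψ.symm ⟨i+1, h⟩ ≤ ψ.symm ⟨i, Nat.lt_of_succ_lt h⟩)) :
    Monotone (ψ.trans (Equiv.swap ⟨i, Nat.lt_of_succ_lt h⟩ ⟨i+1, h⟩)) := by
  set a : Fin n := ⟨i, Nat.lt_of_succ_lt h⟩
  set b : Fin n := ⟨i+1, h⟩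
  intro x y hxy
  simp only [Equiv.trans_apply]
  have huv : ψ x ≤ ψ y := hψ hxy
  have huv' : (ψ x : ℕ) ≤ (ψ y : ℕ) := huv
  by_cases hxa : ψ x = a
  · by_cases hyb : ψ y = b
    · exfalso
      apply hic; left
      have hx' : ψ.symm a = x := by rw [← hxa, Equiv.symm_apply_apply]
      have hy' : ψ.symm b = y := by rw [← hyb, Equiv.symm_apply_apply]
      rw [hx', hy']; exact hxy
    · by_cases hya : ψ y = a
      · have : x = y := ψ.injective (hxa.trans hya.symm)
        subst this; exact le_rfl
      · rw [hxa, Equiv.swap_apply_left, Equiv.swap_apply_of_ne_of_ne hya hyb]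
        have h1 : (ψ y : ℕ) ≠ i := fun hh => hya (Fin.ext hh)
        have h2 : i ≤ (ψ y : ℕ) := by rw [hxa] at huv'; exact huv'
        show (b : ℕ) ≤ (ψ y : ℕ)
        show i + 1 ≤ (ψ y : ℕ)
        omega
  · by_cases hxb : ψ x = b
    · rw [hxb, Equiv.swap_apply_right]
      have h2 : i + 1 ≤ (ψ y : ℕ) := by rw [hxb] at huv'; exact huv'
      by_cases hya : ψ y = a
      · exfalso; have : (ψ y : ℕ) = i := by rw [hya]
        omega
      · by_cases hyb : ψ y = b
        · rw [hyb, Equiv.swap_apply_right]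
        · rw [Equiv.swap_apply_of_ne_of_ne hya hyb]
          show (a : ℕ) ≤ (ψ y : ℕ)
          show i ≤ (ψ y : ℕ)
          omega
    · rw [Equiv.swap_apply_of_ne_of_ne hxa hxb]
      have hx1 : (ψ x : ℕ) ≠ i := fun hh => hxa (Fin.ext hh)
      have hx2 : (ψ x : ℕ) ≠ i + 1 := fun hh => hxb (Fin.ext hh)
      by_cases hya : ψ y = a
      · rw [hya, Equiv.swap_apply_left]
        have : (ψ y : ℕ) = i := by rw [hya]
        show (ψ x : ℕ) ≤ (b : ℕ)
        show (ψ x : ℕ) ≤ i + 1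
        omega
      · by_cases hyb : ψ y = b
        · rw [hyb, Equiv.swap_apply_right]
          have : (ψ y : ℕ) = i + 1 := by rw [hyb]
          show (ψ x : ℕ) ≤ (a : ℕ)
          show (ψ x : ℕ) ≤ i
          omega
        · rw [Equiv.swap_apply_of_ne_of_ne hya hyb]
          exact huv

lemma monotone_tau {n : ℕ} (i : ℕ) (ψ : α ≃ Fin n) (hψ : Monotone ψ) :
    Monotone (tau i ψ) := by
  by_cases h : i + 1 < n
  · by_cases hc : ψ.symm ⟨i, Nat.lt_of_succ_lt h⟩ ≤ ψ.symm ⟨i+1, h⟩ ∨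
        ψ.symm ⟨i+1, h⟩ ≤ ψ.symm ⟨i, Nat.lt_of_succ_lt h⟩
    · rw [tau_of_comp i ψ h hc]; exact hψ
    · rw [tau_of_incomp i ψ h hc]; exact monotone_trans_swap ψ hψ i h hc
  · rw [tau_of_ge i ψ h]; exact hψ

lemma monotone_tau_iff {n : ℕ} (i : ℕ) (ψ : α ≃ Fin n) :
    Monotone (tau i ψ) ↔ Monotone ψ := by
  constructor
  · intro hh
    have := monotone_tau i (tau i ψ) hh
    rwa [tau_tau] at this
  · exact monotone_tau i ψ

/-- The sequence of states of the "bubble pass" (promotion). -/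
noncomputable def gSeq {n : ℕ} (φ : α ≃ Fin n) : ℕ → (α ≃ Fin n)
  | 0 => φ
  | (m+1) => tau m (gSeq φ m)

/-- The reverse pass, inverse to `gSeq · k`. -/
noncomputable def uSeq {n : ℕ} : ℕ → (α ≃ Fin n) → (α ≃ Fin n)
  | 0, ψ => ψ
  | (k+1), ψ => uSeq k (tau k ψ)

lemma uSeq_gSeq {n : ℕ} (k : ℕ) (φ : α ≃ Fin n) : uSeq k (gSeq φ k) = φ := by
  induction k with
  | zero => rfl
  | succ k ih =>
    show uSeq k (tau k (tau k (gSeq φ k))) = φ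
    rw [tau_tau]; exact ih

lemma gSeq_uSeq {n : ℕ} (k : ℕ) (ψ : α ≃ Fin n) : gSeq (uSeq k ψ) k = ψ := by
  induction k generalizing ψ with
  | zero => rfl
  | succ k ih =>
    show tau k (gSeq (uSeq k (tau k ψ)) k) = ψ
    rw [ih (tau k ψ), tau_tau]

lemma monotone_gSeq_iff {n : ℕ} (φ : α ≃ Fin n) (m : ℕ) :
    Monotone (gSeq φ m) ↔ Monotone φ := by
  induction m with
  | zero => exact Iff.rfl
  | succ m ih => rw [show gSeq φ (m+1) = tau m (gSeq φ m) from rfl, monotone_tau_iff, ih]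

/-- The "active element" at stage `m` of the bubble pass. -/
noncomputable def zSeq {n : ℕ} (hn : 0 < n) (φ : α ≃ Fin n) (m : ℕ) : α :=
  (gSeq φ m).symm ⟨min m (n-1), by omega⟩

lemma zSeq_eq {n : ℕ} (hn : 0 < n) (φ : α ≃ Fin n) (m : ℕ) (hm : m ≤ n - 1) :
    zSeq hn φ m = (gSeq φ m).symm ⟨m, by omega⟩ := by
  unfold zSeq
  congr 1
  exact Fin.ext (Nat.min_eq_left hm)

lemma gSeq_symm_of_lt {n : ℕ} (φ : α ≃ Fin n) (m j : ℕ) (hj : j < n) (hmj : m < j) :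
    (gSeq φ m).symm ⟨j, hj⟩ = φ.symm ⟨j, hj⟩ := by
  induction m with
  | zero => rfl
  | succ m ih =>
    have hmj' : m < j := by omega
    show (tau m (gSeq φ m)).symm ⟨j, hj⟩ = _
    by_cases h : m + 1 < n
    · by_cases hc : (gSeq φ m).symm ⟨m, Nat.lt_of_succ_lt h⟩ ≤ (gSeq φ m).symm ⟨m+1, h⟩ ∨
          (gSeq φ m).symm ⟨m+1, h⟩ ≤ (gSeq φ m).symm ⟨m, Nat.lt_of_succ_lt h⟩
      · rw [tau_of_comp m _ h hc]; exact ih hmj'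
      · rw [tau_of_incomp m _ h hc,
          trans_swap_symm_other _ _ _ _ (Fin.ne_of_val_ne (show j ≠ m by omega))
            (Fin.ne_of_val_ne (show j ≠ m + 1 by omega))]
        exact ih hmj'
    · rw [tau_of_ge m _ h]; exact ih hmj'

/-- Dichotomy for one step of the bubble pass. -/
lemma step_basic {n : ℕ} (hn : 0 < n) (φ : α ≃ Fin n) (m : ℕ) (hm : m + 1 < n) :
    (gSeq φ (m+1) = gSeq φ m ∧
      (zSeq hn φ m ≤ φ.symm ⟨m+1, hm⟩ ∨ φ.symm ⟨m+1, hm⟩ ≤ zSeq hn φ m) ∧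
      zSeq hn φ (m+1) = φ.symm ⟨m+1, hm⟩) ∨
    (¬(zSeq hn φ m ≤ φ.symm ⟨m+1, hm⟩ ∨ φ.symm ⟨m+1, hm⟩ ≤ zSeq hn φ m) ∧
      zSeq hn φ (m+1) = zSeq hn φ m ∧
      gSeq φ (m+1) = (gSeq φ m).trans (Equiv.swap ⟨m, Nat.lt_of_succ_lt hm⟩ ⟨m+1, hm⟩)) := by
  have hm1 : m ≤ n - 1 := by omega
  have hm2 : m + 1 ≤ n - 1 := by omega
  have ha : (gSeq φ m).symm ⟨m, Nat.lt_of_succ_lt hm⟩ = zSeq hn φ m :=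
    (zSeq_eq hn φ m hm1).symm
  have hb : (gSeq φ m).symm ⟨m+1, hm⟩ = φ.symm ⟨m+1, hm⟩ :=
    gSeq_symm_of_lt φ m (m+1) hm (Nat.lt_succ_self m)
  have hz1 : zSeq hn φ (m+1) = (gSeq φ (m+1)).symm ⟨m+1, hm⟩ := zSeq_eq hn φ (m+1) hm2
  by_cases hc : (gSeq φ m).symm ⟨m, Nat.lt_of_succ_lt hm⟩ ≤ (gSeq φ m).symm ⟨m+1, hm⟩ ∨
      (gSeq φ m).symm ⟨m+1, hm⟩ ≤ (gSeq φ m).symm ⟨m, Nat.lt_of_succ_lt hm⟩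
  · left
    have hg : gSeq φ (m+1) = gSeq φ m := tau_of_comp m _ hm hc
    refine ⟨hg, ?_, ?_⟩
    · rw [← ha, ← hb]; exact hc
    · rw [hz1, hg, hb]
  · right
    have hg : gSeq φ (m+1) = (gSeq φ m).trans
        (Equiv.swap ⟨m, Nat.lt_of_succ_lt hm⟩ ⟨m+1, hm⟩) := tau_of_incomp m _ hm hc
    refine ⟨?_, ?_, hg⟩
    · rw [← ha, ← hb]; exact hc
    · rw [hz1, hg, trans_swap_symm_right, ha]

lemma phi_zSeq_le {n : ℕ} (hn : 0 < n) (φ : α ≃ Fin n) (m : ℕ) (hm : m ≤ n - 1) :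
    (φ (zSeq hn φ m) : ℕ) ≤ m := by
  induction m with
  | zero =>
    rw [zSeq_eq hn φ 0 (by omega)]
    show ((φ (φ.symm ⟨0, hn⟩)) : ℕ) ≤ 0
    rw [Equiv.apply_symm_apply]
  | succ m ih =>
    have hm' : m + 1 < n := by omega
    rcases step_basic hn φ m hm' with ⟨_, _, hz⟩ | ⟨_, hz, _⟩
    · rw [hz, Equiv.apply_symm_apply]
    · rw [hz]
      have := ih (by omega)
      omega

lemma zSeq_lt_of_comp {n : ℕ} (hn : 0 < n) (φ : α ≃ Fin n) (hφ : Monotone φ)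
    (m : ℕ) (hm : m + 1 < n)
    (hc : zSeq hn φ m ≤ φ.symm ⟨m+1, hm⟩ ∨ φ.symm ⟨m+1, hm⟩ ≤ zSeq hn φ m) :
    zSeq hn φ m < φ.symm ⟨m+1, hm⟩ := by
  have h1 : (φ (zSeq hn φ m) : ℕ) ≤ m := phi_zSeq_le hn φ m (by omega)
  have h2 : (φ (φ.symm ⟨m+1, hm⟩) : ℕ) = m + 1 := by rw [Equiv.apply_symm_apply]
  have hne : zSeq hn φ m ≠ φ.symm ⟨m+1, hm⟩ := by
    intro h; rw [h, h2] at h1; omega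
  rcases hc with hc | hc
  · exact lt_of_le_of_ne hc hne
  · exfalso
    have := hφ hc
    have : (φ (φ.symm ⟨m+1, hm⟩) : ℕ) ≤ (φ (zSeq hn φ m) : ℕ) := this
    omega

lemma zSeq_le_succ {n : ℕ} (hn : 0 < n) (φ : α ≃ Fin n) (hφ : Monotone φ)
    (m : ℕ) (hm : m + 1 < n) : zSeq hn φ m ≤ zSeq hn φ (m+1) := by
  rcases step_basic hn φ m hm with ⟨_, hc, hz⟩ | ⟨_, hz, _⟩
  · rw [hz]; exact (zSeq_lt_of_comp hn φ hφ m hm hc).le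
  · rw [hz]

lemma zSeq_mono {n : ℕ} (hn : 0 < n) (φ : α ≃ Fin n) (hφ : Monotone φ)
    (m m' : ℕ) (hmm : m ≤ m') (hm' : m' ≤ n - 1) : zSeq hn φ m ≤ zSeq hn φ m' := by
  induction m' with
  | zero => have : m = 0 := by omega
            rw [this]
  | succ m' ih =>
    rcases Nat.lt_or_ge m (m'+1) with h | h
    · have h1 : zSeq hn φ m ≤ zSeq hn φ m' := ih (by omega) (by omega)
      exact h1.trans (zSeq_le_succ hn φ hφ m' (by omega))
    · have : m = m' + 1 := by omega
      rw [this]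

lemma lt_position {n : ℕ} (hn : 0 < n) (φ : α ≃ Fin n) (hφ : Monotone φ)
    (m : ℕ) (hm : m ≤ n - 1) (w : α) (hw : zSeq hn φ m < w) : m < (φ w : ℕ) := by
  induction m with
  | zero =>
    have hne : φ w ≠ ⟨0, hn⟩ := by
      intro h
      have : w = zSeq hn φ 0 := by
        rw [zSeq_eq hn φ 0 (by omega)]
        show w = φ.symm ⟨0, hn⟩
        rw [← h, Equiv.symm_apply_apply]
      rw [this] at hw; exact lt_irrefl _ hw
    have : (φ w : ℕ) ≠ 0 := fun h => hne (Fin.ext h)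
    omega
  | succ m ih =>
    have hm' : m + 1 < n := by omega
    rcases step_basic hn φ m hm' with ⟨_, _, hz⟩ | ⟨hc, hz, _⟩
    · rw [hz] at hw
      have hsm : StrictMono φ := hφ.strictMono_of_injective φ.injective
      have := hsm hw
      have h2 : (φ (φ.symm ⟨m+1, hm'⟩) : ℕ) = m + 1 := by rw [Equiv.apply_symm_apply]
      have h3 : (φ (φ.symm ⟨m+1, hm'⟩) : ℕ) < (φ w : ℕ) := this
      omega
    · rw [hz] at hw
      have h1 : m < (φ w : ℕ) := ih (by omega) hw
      by_cases hww : (φ w : ℕ) = m + 1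
      · exfalso
        have : w = φ.symm ⟨m+1, hm'⟩ := by
          rw [Equiv.eq_symm_apply]
          exact Fin.ext hww
        rw [this] at hw
        exact hc (Or.inl hw.le)
      · omega

/-- The promotion chain. -/
noncomputable def chainC {n : ℕ} (hn : 0 < n) (φ : α ≃ Fin n) : Finset α :=
  (Finset.range n).image (zSeq hn φ)

lemma isChain_chainC {n : ℕ} (hn : 0 < n) (φ : α ≃ Fin n) (hφ : Monotone φ) :
    IsChain (· ≤ ·) (↑(chainC hn φ) : Set α) := by
  intro x hx y hy _
  simp only [chainC, Finset.coe_image, Set.mem_image, Finset.mem_coe,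
    Finset.mem_range] at hx hy
  obtain ⟨i, hi, rfl⟩ := hx
  obtain ⟨j, hj, rfl⟩ := hy
  rcases le_total i j with h | h
  · exact Or.inl (zSeq_mono hn φ hφ i j h (by omega))
  · exact Or.inr (zSeq_mono hn φ hφ j i h (by omega))

lemma maximal_chainC {n : ℕ} (hn : 0 < n) (φ : α ≃ Fin n) (hφ : Monotone φ) :
    ∀ t : Finset α, IsChain (· ≤ ·) (↑t : Set α) → chainC hn φ ⊆ t →
      chainC hn φ = t := by
  intro t ht hsub
  refine Finset.Subset.antisymm hsub ?_
  intro u hu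
  by_contra hu'
  have hmem : ∀ m : ℕ, m < n → zSeq hn φ m ∈ chainC hn φ := fun m hm =>
    Finset.mem_image_of_mem _ (Finset.mem_range.mpr hm)
  have hcomp : ∀ m : ℕ, m < n → zSeq hn φ m ≤ u ∨ u ≤ zSeq hn φ m := by
    intro m hm
    have hne : zSeq hn φ m ≠ u := fun h => hu' (h ▸ hmem m hm)
    exact ht (hsub (hmem m hm)) hu hne
  have hsm : StrictMono φ := hφ.strictMono_of_injective φ.injective
  have hltu : ∀ m : ℕ, m < n → u ≤ zSeq hn φ m → u < zSeq hn φ m := by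
    intro m hm hle
    exact lt_of_le_of_ne hle (fun h => hu' (h ▸ hmem m hm))
  have h0 : zSeq hn φ 0 < u := by
    rcases hcomp 0 hn with h | h
    · exact lt_of_le_of_ne h (fun h' => hu' (h' ▸ hmem 0 hn))
    · exfalso
      have hlt : u < zSeq hn φ 0 := hltu 0 hn h
      have hz0 : zSeq hn φ 0 = φ.symm ⟨0, hn⟩ := zSeq_eq hn φ 0 (by omega)
      rw [hz0] at hlt
      have := hsm hlt
      rw [Equiv.apply_symm_apply] at this
      have h2 : (φ u : ℕ) < 0 := this
      omega
  set s : Finset ℕ := (Finset.range n).filter (fun m => zSeq hn φ m < u) with hs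
  have h0s : 0 ∈ s := by
    rw [hs]; exact Finset.mem_filter.mpr ⟨Finset.mem_range.mpr hn, h0⟩
  have hsne : s.Nonempty := ⟨0, h0s⟩
  set m0 := s.max' hsne with hm0
  have hm0mem : m0 ∈ s := s.max'_mem hsne
  have hm0n : m0 < n := Finset.mem_range.mp (Finset.mem_filter.mp hm0mem).1
  have hm0lt : zSeq hn φ m0 < u := (Finset.mem_filter.mp hm0mem).2
  by_cases hcase : m0 = n - 1
  · have := lt_position hn φ hφ m0 (by omega) u hm0lt
    have h2 : (φ u : ℕ) < n := (φ u).isLt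
    omega
  · have hm0' : m0 + 1 < n := by omega
    have hnotmem : ¬ (zSeq hn φ (m0+1) < u) := by
      intro hlt
      have : m0 + 1 ∈ s := Finset.mem_filter.mpr ⟨Finset.mem_range.mpr hm0', hlt⟩
      have := s.le_max' _ this
      omega
    have hulv : u < zSeq hn φ (m0+1) := by
      rcases hcomp (m0+1) hm0' with h | h
      · exact absurd (lt_of_le_of_ne h (fun h' => hu' (h' ▸ hmem _ hm0'))) hnotmem
      · exact hltu _ hm0' h
    rcases step_basic hn φ m0 hm0' with ⟨_, _, hz⟩ | ⟨_, hz, _⟩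
    · rw [hz] at hulv
      have h1 := hsm hulv
      rw [Equiv.apply_symm_apply] at h1
      have h2 : (φ u : ℕ) < m0 + 1 := Fin.lt_def.mp h1
      have h3 := lt_position hn φ hφ m0 (by omega) u hm0lt
      omega
    · rw [hz] at hulv
      exact absurd hm0lt (asymm hulv)

lemma sign_invariant {n : ℕ} (hn : 0 < n) (φ : α ≃ Fin n) (b : α ≃ Fin n)
    (m : ℕ) (hm : m ≤ n - 1) :
    ((Equiv.Perm.sign (b.symm.trans (gSeq φ m)) : ℤ)) *
      (-1 : ℤ)^(((Finset.range (m+1)).image (zSeq hn φ)).card) =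
    ((Equiv.Perm.sign (b.symm.trans φ) : ℤ)) * (-1 : ℤ)^(m+1) := by
  induction m with
  | zero =>
    have h1 : ((Finset.range 1).image (zSeq hn φ)).card = 1 := by
      rw [Finset.range_one, Finset.image_singleton, Finset.card_singleton]
    rw [h1]
    rfl
  | succ m ih =>
    have hm' : m + 1 < n := by omega
    have ihh := ih (by omega)
    have hins : (Finset.range (m+2)).image (zSeq hn φ) =
        insert (zSeq hn φ (m+1)) ((Finset.range (m+1)).image (zSeq hn φ)) := by
      rw [show m + 2 = (m+1) + 1 from rfl, Finset.range_add_one, Finset.image_insert]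
    rcases step_basic hn φ m hm' with ⟨hg, _, hz⟩ | ⟨_, hz, hg⟩
    · -- comparable: no swap, new chain element
      have hnotmem : zSeq hn φ (m+1) ∉ (Finset.range (m+1)).image (zSeq hn φ) := by
        intro hmemm
        obtain ⟨j, hj, hje⟩ := Finset.mem_image.mp hmemm
        have hj' : j < m + 1 := Finset.mem_range.mp hj
        have h1 : (φ (zSeq hn φ j) : ℕ) ≤ j := phi_zSeq_le hn φ j (by omega)
        have h2 : (φ (zSeq hn φ (m+1)) : ℕ) = m + 1 := by
          rw [hz, Equiv.apply_symm_apply]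
        rw [hje, h2] at h1
        omega
      rw [hins, Finset.card_insert_of_notMem hnotmem, hg]
      rw [pow_succ]
      rw [show m + 1 + 1 = (m + 1) + 1 from rfl, pow_succ (-1 : ℤ) (m+1)]
      linear_combination (-1 : ℤ) * ihh
    · -- incomparable: swap, sign flips, same chain element
      have hmemm : zSeq hn φ (m+1) ∈ (Finset.range (m+1)).image (zSeq hn φ) := by
        rw [hz]
        exact Finset.mem_image_of_mem _ (Finset.mem_range.mpr (Nat.lt_succ_self m))
      have hcard : (Finset.range (m+2)).image (zSeq hn φ) =
          (Finset.range (m+1)).image (zSeq hn φ) := by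
        rw [hins, Finset.insert_eq_self.mpr hmemm]
      have hsign : (Equiv.Perm.sign (b.symm.trans (gSeq φ (m+1))) : ℤ) =
          -(Equiv.Perm.sign (b.symm.trans (gSeq φ m)) : ℤ) := by
        rw [hg, ← Equiv.trans_assoc]
        have hne : (⟨m, Nat.lt_of_succ_lt hm'⟩ : Fin n) ≠ ⟨m+1, hm'⟩ :=
          Fin.ne_of_val_ne (show m ≠ m + 1 by omega)
        have : (b.symm.trans (gSeq φ m)).trans
            (Equiv.swap (⟨m, Nat.lt_of_succ_lt hm'⟩ : Fin n) ⟨m+1, hm'⟩) =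
            (Equiv.swap (⟨m, Nat.lt_of_succ_lt hm'⟩ : Fin n) ⟨m+1, hm'⟩) *
              (b.symm.trans (gSeq φ m)) := rfl
        rw [this, map_mul, Equiv.Perm.sign_swap hne]
        push_cast
        ring
      rw [hcard, hsign]
      rw [show m + 1 + 1 = (m + 1) + 1 from rfl, pow_succ (-1 : ℤ) (m+1)]
      linear_combination (-1 : ℤ) * ihh

/-- Sign of the full promotion pass. -/
lemma sign_flip {n : ℕ} (hn : 0 < n) (φ : α ≃ Fin n) (hφ : Monotone φ)
    (b : α ≃ Fin n) (hodd : ((chainC hn φ).card + n) % 2 = 1) :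
    (Equiv.Perm.sign (b.symm.trans (gSeq φ (n-1))) : ℤ) =
      -(Equiv.Perm.sign (b.symm.trans φ) : ℤ) := by
  have h1 := sign_invariant hn φ b (n-1) le_rfl
  have h2 : n - 1 + 1 = n := by omega
  rw [h2] at h1
  have h3 : ((Finset.range n).image (zSeq hn φ)) = chainC hn φ := rfl
  rw [h3] at h1
  set c := (chainC hn φ).card with hc
  have h4 : ((-1 : ℤ))^c * (-1 : ℤ)^n = -1 := by
    rw [← pow_add]
    exact Odd.neg_one_pow (Nat.odd_iff.mpr hodd)
  have h5 : ((-1 : ℤ))^c * (-1 : ℤ)^c = 1 := by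
    rw [← pow_add]
    exact Even.neg_one_pow ⟨c, by omega⟩
  linear_combination ((-1 : ℤ))^c * h1 -
    (Equiv.Perm.sign (b.symm.trans (gSeq φ (n-1))) : ℤ) * h5 +
    (Equiv.Perm.sign (b.symm.trans φ) : ℤ) * h4

end StanleyAux

/-- Stanley's lemma. Let `P` be a finite poset such that the cardinalities of
all maximal chains of `P` have the same parity, opposite to the parity of `card P`. Then `P` is
sign-balanced: relative to any reference bijection `b`, the number of even linearizations of
`P` equals the number of odd ones. -/
theorem signBalanced_of_maximalChain_parity (α : Type*) [Fintype α] [PartialOrder α]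
    (hparity : ∃ k : ℕ,
      (∀ s : Finset α, IsChain (· ≤ ·) (↑s : Set α) →
          (∀ t : Finset α, IsChain (· ≤ ·) (↑t : Set α) → s ⊆ t → s = t) →
          s.card % 2 = k) ∧
      k ≠ Fintype.card α % 2) :
    ∀ b : α ≃ Fin (Fintype.card α),
      (∑ φ : α ≃ Fin (Fintype.card α),
        if Monotone ⇑φ then ((Equiv.Perm.sign (b.symm.trans φ)) : ℤ) else 0) = 0 := by
  intro b
  obtain ⟨k, hk1, hk2⟩ := hparity
  rcases Nat.eq_zero_or_pos (Fintype.card α) with h0 | hn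
  · exfalso
    have hE : IsEmpty α := Fintype.card_eq_zero_iff.mp h0
    have hch : IsChain (· ≤ ·) (↑(∅ : Finset α) : Set α) := by
      rw [Finset.coe_empty]; exact Set.pairwise_empty _
    have hk0 := hk1 ∅ hch (fun t _ _ => (Finset.eq_empty_of_isEmpty t).symm)
    rw [Finset.card_empty] at hk0
    omega
  · set f : (α ≃ Fin (Fintype.card α)) → ℤ := fun φ =>
      if Monotone ⇑φ then ((Equiv.Perm.sign (b.symm.trans φ)) : ℤ) else 0 with hf
    set T : (α ≃ Fin (Fintype.card α)) → (α ≃ Fin (Fintype.card α)) :=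
      fun ψ => StanleyAux.gSeq ψ (Fintype.card α - 1) with hT
    have hbij : Function.Bijective T :=
      Function.bijective_iff_has_inverse.mpr
        ⟨fun ψ => StanleyAux.uSeq (Fintype.card α - 1) ψ,
          fun ψ => StanleyAux.uSeq_gSeq _ _, fun ψ => StanleyAux.gSeq_uSeq _ _⟩
    have key : ∀ φ : α ≃ Fin (Fintype.card α), f (T φ) = -(f φ) := by
      intro φ
      by_cases hφ : Monotone ⇑φ
      · have hmono : Monotone ⇑(T φ) :=
          (StanleyAux.monotone_gSeq_iff φ (Fintype.card α - 1)).mpr hφ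
        rw [hf]
        simp only [if_pos hmono, if_pos hφ]
        have hC := hk1 (StanleyAux.chainC hn φ)
          (StanleyAux.isChain_chainC hn φ hφ)
          (StanleyAux.maximal_chainC hn φ hφ)
        have hodd : ((StanleyAux.chainC hn φ).card + Fintype.card α) % 2 = 1 := by
          omega
        exact StanleyAux.sign_flip hn φ hφ b hodd
      · have hnm : ¬ Monotone ⇑(T φ) := fun h =>
          hφ ((StanleyAux.monotone_gSeq_iff φ (Fintype.card α - 1)).mp h)
        rw [hf]
        simp only [if_neg hnm, if_neg hφ, neg_zero]
    have hsum : (∑ φ : α ≃ Fin (Fintype.card α), f (T φ)) =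
        ∑ φ : α ≃ Fin (Fintype.card α), f φ :=
      Fintype.sum_bijective T hbij _ _ (fun _ => rfl)
    have hsum2 : (∑ φ : α ≃ Fin (Fintype.card α), f (T φ)) =
        -∑ φ : α ≃ Fin (Fintype.card α), f φ := by
      rw [← Finset.sum_neg_distrib]
      exact Finset.sum_congr rfl (fun φ _ => key φ)
    have : (∑ φ : α ≃ Fin (Fintype.card α), f φ) = 0 := by
      have := hsum.symm.trans hsum2
      linarith
    exact this
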